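/- Assume σ ≠ 0. For every integer r ≥ 1, the conditional r-th falling factorial moment of the number of old blocks re-observed satisfies E[(R)_{r↓} | π] = r!·Σ_{v=0}^{r} binom(j−v, r−v)·(−1)^v·Σ_{{c_1,…,c_v}∈C_{j,v}} Σ_{k=0}^{m} (V_{n+m,j+k}/V_{n,j})·C(m, k; σ, −n + Σ_{i=1}^{v} n_{c_i} + (j−v)σ)/σ^k. -/

import Mathlib

open Finset

attribute [local instance] Classical.propDecidable

noncomputable section

/-- Rising factorial `x(x+1)⋯(x+N−1)`. -/
def risingFac (x : ℝ) (N : ℕ) : ℝ := ∏ i ∈ Finset.range N, (x + i)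

/-- Falling factorial `x(x−1)⋯(x−N+1)`. -/
def fallingFac (x : ℝ) (N : ℕ) : ℝ := ∏ i ∈ Finset.range N, (x - i)

/-- Noncentral generalized factorial coefficient `C(N,k;σ,γ)`. -/
def gfc (N k : ℕ) (σ γ : ℝ) : ℝ :=
  (1 / (Nat.factorial k : ℝ)) *
    ∑ i ∈ Finset.range (k + 1),
      (-1 : ℝ) ^ i * (Nat.choose k i : ℝ) * risingFac (-(i : ℝ) * σ - γ) N

/-- Central generalized factorial coefficient `C(N,k;σ)`. -/
def cgfc (N k : ℕ) (σ : ℝ) : ℝ := gfc N k σ 0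

/-- Binomial coefficient over `ℤ`, zero unless `0 ≤ b ≤ a`. -/
def ibinom (a b : ℤ) : ℝ :=
  if 0 ≤ b ∧ b ≤ a then (Nat.choose a.toNat b.toNat : ℝ) else 0

/-- Multinomial coefficient `m!/((l!)^r (m−rl)!)`, zero if `rl > m`. -/
def multinom (m l r : ℕ) : ℝ :=
  if r * l ≤ m then
    (Nat.factorial m : ℝ) / ((Nat.factorial l : ℝ) ^ r * (Nat.factorial (m - r * l) : ℝ))
  else 0

/-- `P` is a set partition of the finset `s`. -/
def IsPartOn {α : Type*} (s : Finset α) (P : Finset (Finset α)) : Prop :=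
  (∀ B ∈ P, B ⊆ s) ∧ ∅ ∉ P ∧ ∀ a ∈ s, ∃! B, B ∈ P ∧ a ∈ B

/-- Restriction of a partition to `s`. -/
def restrictPart {α : Type*} [DecidableEq α] (P : Finset (Finset α)) (s : Finset α) :
    Finset (Finset α) := (P.image fun C => C ∩ s).erase ∅

/-- Gibbs probability of a partition with block sizes `|C|` and `VN k` the Gibbs weight. -/
def gibbsW {α : Type*} (σ : ℝ) (VN : ℕ → ℝ) (P : Finset (Finset α)) : ℝ :=
  VN P.card * ∏ C ∈ P, risingFac (1 - σ) (C.card - 1)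

/-- Ewens–Pitman weight system. -/
def EPV (σ θ : ℝ) : ℕ → ℕ → ℝ :=
  fun N k => (∏ i ∈ Finset.range k, (θ + (i : ℝ) * σ)) / risingFac θ N

/-- The "old" elements `{1,…,n}` inside `{1,…,n+m}`. -/
def oldSet (n m : ℕ) : Finset (Fin (n + m)) :=
  Finset.univ.filter fun x => (x : ℕ) < n

/-- Number of new elements in the block of `ρ` containing the old block `Bi`. -/
def Scount (n m : ℕ) (Bi : Finset (Fin (n + m))) (ρ : Finset (Finset (Fin (n + m)))) : ℕ :=
  ∑ C ∈ ρ.filter (fun C => Bi ⊆ C), (C \ oldSet n m).card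

/-- Partitions of `{1,…,n+m}` extending the partition `πP` of the old elements. -/
def extensions (n m : ℕ) (πP : Finset (Finset (Fin (n + m)))) :
    Finset (Finset (Finset (Fin (n + m)))) :=
  Finset.univ.filter fun ρ => IsPartOn Finset.univ ρ ∧ restrictPart ρ (oldSet n m) = πP

/-- Conditional expectation given complete information (the initial partition `πP`). -/
def condExpPi (σ : ℝ) (V : ℕ → ℕ → ℝ) (n m : ℕ) (πP : Finset (Finset (Fin (n + m))))
    (f : Finset (Finset (Fin (n + m))) → ℝ) : ℝ :=
  (∑ ρ ∈ extensions n m πP, f ρ * gibbsW σ (V (n + m)) ρ) /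
    (∑ ρ ∈ extensions n m πP, gibbsW σ (V (n + m)) ρ)

/-- Partitions of `{1,…,n+m}` whose restriction to the old elements has exactly `j` blocks. -/
def withJ (n m j : ℕ) : Finset (Finset (Finset (Fin (n + m)))) :=
  Finset.univ.filter fun ρ =>
    IsPartOn Finset.univ ρ ∧ (restrictPart ρ (oldSet n m)).card = j

/-- Partitions of `s` with exactly `j` blocks. -/
def partsJOf {α : Type*} [Fintype α] (s : Finset α) (j : ℕ) :
    Finset (Finset (Finset α)) :=
  Finset.univ.filter fun π' => IsPartOn s π' ∧ π'.card = j

/-- Conditional expectation given the incomplete information `K_n = j`. -/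
def condExpK (σ : ℝ) (V : ℕ → ℕ → ℝ) (n m j : ℕ)
    (f : Finset (Finset (Fin (n + m))) → ℝ) : ℝ :=
  (∑ ρ ∈ withJ n m j, f ρ * gibbsW σ (V (n + m)) ρ) /
    (∑ π' ∈ partsJOf (oldSet n m) j, gibbsW σ (V n) π')

/-- Number of old blocks (indexed by `B`) re-observed in the additional sample. -/
def RcntB (n m j : ℕ) (B : Fin j → Finset (Fin (n + m)))
    (ρ : Finset (Finset (Fin (n + m)))) : ℕ :=
  (Finset.univ.filter fun i : Fin j => Scount n m (B i) ρ ≠ 0).card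

/-- Number of old blocks (indexed by `B`) re-observed with frequency `l`. -/
def RlcntB (n m j l : ℕ) (B : Fin j → Finset (Fin (n + m)))
    (ρ : Finset (Finset (Fin (n + m)))) : ℕ :=
  (Finset.univ.filter fun i : Fin j => Scount n m (B i) ρ = l).card

/-- Number of blocks of the restriction whose containing block has a new element. -/
def Rcnt (n m : ℕ) (ρ : Finset (Finset (Fin (n + m)))) : ℕ :=
  ((restrictPart ρ (oldSet n m)).filter fun Bi =>
    ∃ C ∈ ρ, Bi ⊆ C ∧ (C \ oldSet n m) ≠ ∅).card

/-- Number of blocks of the restriction whose containing block has exactly `l` new elements. -/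
def Rlcnt (n m l : ℕ) (ρ : Finset (Finset (Fin (n + m)))) : ℕ :=
  ((restrictPart ρ (oldSet n m)).filter fun Bi =>
    ∃ C ∈ ρ, Bi ⊆ C ∧ (C \ oldSet n m).card = l).card

/-- Number of bijections from `Fin j` onto the blocks of `π'` satisfying `Q`. -/
def bijCount {α : Type*} [Fintype α] (j : ℕ) (π' : Finset (Finset α))
    (Q : (Fin j → Finset α) → Prop) : ℕ :=
  ((Finset.univ : Finset (Fin j → Finset α)).filter fun β =>
    Function.Injective β ∧ Finset.image β Finset.univ = π' ∧ Q β).card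

/-- Conditional expectation given almost-complete information. -/
def condExpTau (σ : ℝ) (V : ℕ → ℕ → ℝ) (n m j p : ℕ) (τ : Fin p → Fin j) (nτ : Fin p → ℕ)
    (f : Finset (Finset (Fin (n + m))) → ℝ) : ℝ :=
  (∑ ρ ∈ withJ n m j,
      (bijCount j (restrictPart ρ (oldSet n m)) (fun β => ∀ i, (β (τ i)).card = nτ i) : ℝ) *
        f ρ * gibbsW σ (V (n + m)) ρ) /
    (∑ π' ∈ partsJOf (oldSet n m) j,
      (bijCount j π' (fun β => ∀ i, (β (τ i)).card = nτ i) : ℝ) * gibbsW σ (V n) π')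


set_option linter.unusedSectionVars false
set_option linter.unusedVariables false
set_option maxHeartbeats 2000000

section Aux1
lemma risingFac_zero (x : ℝ) : risingFac x 0 = 1 := by simp [risingFac]

lemma risingFac_succ (x : ℝ) (N : ℕ) : risingFac x (N + 1) = risingFac x N * (x + N) := by
  simp [risingFac, Finset.prod_range_succ]

lemma risingFac_pos {x : ℝ} (hx : 0 < x) (N : ℕ) : 0 < risingFac x N := by
  induction N with
  | zero => simp [risingFac_zero]
  | succ N ih => rw [risingFac_succ]; positivity

lemma fallingFac_succ (x : ℝ) (N : ℕ) : fallingFac x (N + 1) = fallingFac x N * (x - N) := by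
  simp [fallingFac, Finset.prod_range_succ]

lemma fallingFac_cast (R r : ℕ) : fallingFac (R : ℝ) r = (R.descFactorial r : ℝ) := by
  induction r with
  | zero => simp [fallingFac]
  | succ r ih =>
    rw [fallingFac_succ, ih, Nat.descFactorial_succ]
    rcases le_or_gt (r + 1) R with h | h
    · push_cast [Nat.cast_sub (Nat.le_of_succ_le h)]
      ring
    · rcases Nat.lt_succ_iff_lt_or_eq.mp h with h' | h'
      · rw [Nat.descFactorial_eq_zero_iff_lt.mpr h']
        simp
      · subst h'; simp

lemma fallingFac_nat_choose (R r : ℕ) :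
    fallingFac (R : ℝ) r = (Nat.factorial r : ℝ) * (R.choose r : ℝ) := by
  rw [fallingFac_cast, Nat.descFactorial_eq_factorial_mul_choose]
  push_cast; ring

lemma gfc_zero_zero (σ γ : ℝ) : gfc 0 0 σ γ = 1 := by
  simp [gfc, risingFac]

lemma gfc_zero_succ (k : ℕ) (σ γ : ℝ) : gfc 0 (k + 1) σ γ = 0 := by
  simp only [gfc, risingFac, Finset.range_zero, Finset.prod_empty, mul_one]
  have h := Int.alternating_sum_range_choose (n := k + 1)
  rw [if_neg (Nat.succ_ne_zero k)] at h
  have h2 : ((∑ i ∈ Finset.range (k + 1 + 1), (-1 : ℤ) ^ i * ((k+1).choose i : ℤ) : ℤ) : ℝ) = 0 := by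
    rw [h]; norm_num
  push_cast at h2
  rw [h2, mul_zero]

lemma gfc_succ_zero (N : ℕ) (σ γ : ℝ) :
    gfc (N + 1) 0 σ γ = ((N : ℝ) - γ) * gfc N 0 σ γ := by
  norm_num [gfc, Finset.sum_range_succ, Finset.sum_range_zero, risingFac_succ]
  ring

lemma gfc_succ_succ (N k : ℕ) (σ γ : ℝ) :
    gfc (N + 1) (k + 1) σ γ =
      σ * gfc N k σ γ + ((N : ℝ) - ((k : ℝ) + 1) * σ - γ) * gfc N (k + 1) σ γ := by
  have key : ∀ i ∈ Finset.range (k + 2),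
      (-1 : ℝ) ^ i * ((k+1).choose i : ℝ) * risingFac (-(i : ℝ) * σ - γ) (N + 1)
      = ((N : ℝ) - ((k : ℝ) + 1) * σ - γ) *
          ((-1 : ℝ) ^ i * ((k+1).choose i : ℝ) * risingFac (-(i : ℝ) * σ - γ) N)
        + (σ * ((k : ℝ) + 1)) * ((-1 : ℝ) ^ i * ((k).choose i : ℝ) *
            risingFac (-(i : ℝ) * σ - γ) N) := by
    intro i _
    rw [risingFac_succ]
    have hc : ((k).choose i : ℝ) * ((k : ℝ) + 1) = ((k+1).choose i : ℝ) * (((k : ℝ) + 1) - i) := by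
      rcases le_or_gt i (k + 1) with hi | hi
      · have := Nat.choose_mul_succ_eq k i
        have h2 : ((k.choose i * (k + 1) : ℕ) : ℝ) = (((k+1).choose i * (k + 1 - i) : ℕ) : ℝ) := by
          rw [this]
        push_cast [Nat.cast_sub hi] at h2
        push_cast
        linarith [h2]
      · rw [Nat.choose_eq_zero_of_lt hi, Nat.choose_eq_zero_of_lt (by omega)]
        simp
    linear_combination (-((-1 : ℝ) ^ i * risingFac (-(i : ℝ) * σ - γ) N * σ)) * hc
  simp only [gfc]
  rw [Finset.sum_congr rfl key, Finset.sum_add_distrib, ← Finset.mul_sum, ← Finset.mul_sum]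
  have hdrop : ∑ i ∈ Finset.range (k + 2),
      (-1 : ℝ) ^ i * ((k).choose i : ℝ) * risingFac (-(i : ℝ) * σ - γ) N
      = ∑ i ∈ Finset.range (k + 1),
      (-1 : ℝ) ^ i * ((k).choose i : ℝ) * risingFac (-(i : ℝ) * σ - γ) N := by
    rw [Finset.sum_range_succ, Nat.choose_succ_self]
    simp
  rw [hdrop]
  have hfac : (Nat.factorial (k + 1) : ℝ) = (Nat.factorial k : ℝ) * ((k : ℝ) + 1) := by
    rw [Nat.factorial_succ]; push_cast; ring
  have hfk : (Nat.factorial k : ℝ) ≠ 0 := Nat.cast_ne_zero.mpr (Nat.factorial_ne_zero k)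
  have hfk1 : (Nat.factorial (k + 1) : ℝ) ≠ 0 := Nat.cast_ne_zero.mpr (Nat.factorial_ne_zero _)
  rw [hfac]
  field_simp
  ring

lemma gfc_eq_zero_of_lt {N k : ℕ} (h : N < k) (σ γ : ℝ) : gfc N k σ γ = 0 := by
  induction N generalizing k with
  | zero =>
    obtain ⟨k', rfl⟩ : ∃ k', k = k' + 1 := ⟨k - 1, by omega⟩
    exact gfc_zero_succ k' σ γ
  | succ N ih =>
    obtain ⟨k', rfl⟩ : ∃ k', k = k' + 1 := ⟨k - 1, by omega⟩
    rw [gfc_succ_succ, ih (by omega), ih (by omega)]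
    ring

end Aux1

section Aux2
variable {α : Type*} [Fintype α] [DecidableEq α]
def parts (s : Finset α) : Finset (Finset (Finset α)) :=
  Finset.univ.filter (IsPartOn s)

lemma mem_parts {s : Finset α} {P : Finset (Finset α)} : P ∈ parts s ↔ IsPartOn s P := by
  simp [parts]

namespace IsPartOn

variable {s : Finset α} {P : Finset (Finset α)}

lemma bsubset (hP : IsPartOn s P) {B : Finset α} (hB : B ∈ P) : B ⊆ s := hP.1 B hB

lemma bnonempty (hP : IsPartOn s P) {B : Finset α} (hB : B ∈ P) : B.Nonempty := by
  rw [Finset.nonempty_iff_ne_empty]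
  rintro rfl; exact hP.2.1 hB

lemma eq_of_mem (hP : IsPartOn s P) {B C : Finset α} {a : α} (hB : B ∈ P) (hC : C ∈ P)
    (haB : a ∈ B) (haC : a ∈ C) : B = C := by
  have ha : a ∈ s := hP.1 B hB haB
  obtain ⟨D, -, hD⟩ := hP.2.2 a ha
  rw [hD B ⟨hB, haB⟩, hD C ⟨hC, haC⟩]

lemma disj (hP : IsPartOn s P) {B C : Finset α} (hB : B ∈ P) (hC : C ∈ P) (hne : B ≠ C) :
    Disjoint B C := by
  rw [Finset.disjoint_left]
  intro a haB haC
  exact hne (hP.eq_of_mem hB hC haB haC)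

lemma biUnion_eq (hP : IsPartOn s P) : P.biUnion id = s := by
  apply Finset.Subset.antisymm
  · intro a ha
    rw [Finset.mem_biUnion] at ha
    obtain ⟨B, hB, haB⟩ := ha
    exact hP.1 B hB haB
  · intro a ha
    obtain ⟨B, ⟨hB, haB⟩, -⟩ := hP.2.2 a ha
    exact Finset.mem_biUnion.mpr ⟨B, hB, haB⟩

lemma sum_card (hP : IsPartOn s P) : ∑ C ∈ P, C.card = s.card := by
  rw [← hP.biUnion_eq, Finset.card_biUnion]
  · rfl
  · intro x hx y hy hxy
    exact hP.disj hx hy hxy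

lemma card_le (hP : IsPartOn s P) : P.card ≤ s.card := by
  rw [← hP.sum_card]
  calc P.card = ∑ _C ∈ P, 1 := by simp
  _ ≤ ∑ C ∈ P, C.card := by
      apply Finset.sum_le_sum
      intro C hC
      exact Nat.one_le_iff_ne_zero.mpr (Finset.card_ne_zero_of_mem (hP.bnonempty hC).choose_spec)

end IsPartOn

lemma singleton_not_mem {s : Finset α} {τ : Finset (Finset α)} {t : α}
    (hτ : IsPartOn s τ) (ht : t ∉ s) : {t} ∉ τ :=
  fun h => ht (hτ.bsubset h (Finset.mem_singleton_self t))

lemma mem_not_mem_block {s : Finset α} {τ : Finset (Finset α)} {t : α} {C : Finset α}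
    (hτ : IsPartOn s τ) (ht : t ∉ s) (hC : C ∈ τ) : t ∉ C := fun h => ht (hτ.bsubset hC h)

lemma isPartOn_insert_singleton {s : Finset α} {τ : Finset (Finset α)} {t : α}
    (hτ : IsPartOn s τ) (ht : t ∉ s) : IsPartOn (insert t s) (insert {t} τ) := by
  refine ⟨?_, ?_, ?_⟩
  · intro B hB
    rcases Finset.mem_insert.mp hB with rfl | hB
    · simp
    · exact (hτ.bsubset hB).trans (Finset.subset_insert _ _)
  · intro h
    rcases Finset.mem_insert.mp h with h | h
    · exact absurd h.symm (Finset.singleton_ne_empty t)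
    · exact hτ.2.1 h
  · intro a ha
    rcases Finset.mem_insert.mp ha with heq | ha
    · refine ⟨{t}, ⟨Finset.mem_insert_self _ _, by simp [heq]⟩, ?_⟩
      rintro B ⟨hB, haB⟩
      rcases Finset.mem_insert.mp hB with rfl | hB
      · rfl
      · exact absurd (hτ.bsubset hB haB) (heq ▸ ht)
    · obtain ⟨B, ⟨hB, haB⟩, hu⟩ := hτ.2.2 a ha
      refine ⟨B, ⟨Finset.mem_insert_of_mem hB, haB⟩, ?_⟩
      rintro D ⟨hD, haD⟩
      rcases Finset.mem_insert.mp hD with rfl | hD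
      · exact absurd ((Finset.mem_singleton.mp haD) ▸ ha) ht
      · exact hu D ⟨hD, haD⟩

lemma isPartOn_insert_block {s : Finset α} {τ : Finset (Finset α)} {t : α} {C : Finset α}
    (hτ : IsPartOn s τ) (ht : t ∉ s) (hC : C ∈ τ) :
    IsPartOn (insert t s) (insert (insert t C) (τ.erase C)) := by
  refine ⟨?_, ?_, ?_⟩
  · intro B hB
    rcases Finset.mem_insert.mp hB with rfl | hB
    · exact Finset.insert_subset_insert _ (hτ.bsubset hC)
    · exact (hτ.bsubset (Finset.mem_of_mem_erase hB)).trans (Finset.subset_insert _ _)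
  · intro h
    rcases Finset.mem_insert.mp h with h | h
    · exact absurd h.symm (Finset.insert_ne_empty t C)
    · exact hτ.2.1 (Finset.mem_of_mem_erase h)
  · intro a ha
    have key : ∀ D ∈ insert (insert t C) (τ.erase C), ∀ x, x ∈ D →
        (x = t ∧ D = insert t C) ∨
          (x ∈ s ∧ ((D = insert t C ∧ x ∈ C) ∨ (D ∈ τ.erase C ∧ x ∈ D))) := by
      intro D hD x hxD
      rcases Finset.mem_insert.mp hD with rfl | hD
      · rcases Finset.mem_insert.mp hxD with rfl | hx
        · exact Or.inl ⟨rfl, rfl⟩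
        · exact Or.inr ⟨hτ.bsubset hC hx, Or.inl ⟨rfl, hx⟩⟩
      · exact Or.inr ⟨hτ.bsubset (Finset.mem_of_mem_erase hD) hxD, Or.inr ⟨hD, hxD⟩⟩
    rcases Finset.mem_insert.mp ha with heq | ha
    · refine ⟨insert t C, ⟨Finset.mem_insert_self _ _, heq ▸ Finset.mem_insert_self _ _⟩, ?_⟩
      rintro D ⟨hD, haD⟩
      rcases key D hD a haD with ⟨-, h⟩ | ⟨h, -⟩
      · exact h
      · exact absurd (heq ▸ h) (heq ▸ ht)
    · obtain ⟨B, ⟨hB, haB⟩, hu⟩ := hτ.2.2 a ha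
      by_cases hBC : B = C
      · subst hBC
        refine ⟨insert t B, ⟨Finset.mem_insert_self _ _, Finset.mem_insert_of_mem haB⟩, ?_⟩
        rintro D ⟨hD, haD⟩
        rcases key D hD a haD with ⟨hat, -⟩ | ⟨-, ⟨hDe, -⟩ | ⟨hD', haD'⟩⟩
        · exact absurd (hat ▸ ha) ht
        · exact hDe
        · exact absurd (hu D ⟨Finset.mem_of_mem_erase hD', haD'⟩)
            (Finset.ne_of_mem_erase hD')
      · refine ⟨B, ⟨Finset.mem_insert_of_mem (Finset.mem_erase.mpr ⟨hBC, hB⟩), haB⟩, ?_⟩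
        rintro D ⟨hD, haD⟩
        rcases key D hD a haD with ⟨hat, -⟩ | ⟨-, ⟨hDe, haC⟩ | ⟨hD', haD'⟩⟩
        · exact absurd (hat ▸ ha) ht
        · exact absurd (hu C ⟨hC, haC⟩).symm hBC
        · exact hu D ⟨Finset.mem_of_mem_erase hD', haD'⟩


/-- The block of `ρ` containing `t` (deterministically). -/
def blockOf (ρ : Finset (Finset α)) (t : α) : Finset α :=
  Finset.univ.filter (fun a => ∃ C ∈ ρ, t ∈ C ∧ a ∈ C)

lemma blockOf_eq {u : Finset α} {ρ : Finset (Finset α)} (hρ : IsPartOn u ρ)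
    {C : Finset α} {t : α} (hC : C ∈ ρ) (htC : t ∈ C) : blockOf ρ t = C := by
  ext a
  simp only [blockOf, Finset.mem_filter, Finset.mem_univ, true_and]
  constructor
  · rintro ⟨D, hD, htD, haD⟩
    rwa [← hρ.eq_of_mem hD hC htD htC]
  · intro ha; exact ⟨C, hC, htC, ha⟩

lemma erase_t_nonempty {u : Finset α} {ρ : Finset (Finset α)} (hρ : IsPartOn u ρ)
    {C' : Finset α} {t : α} (hC' : C' ∈ ρ) (htC' : t ∈ C') (hst : ({t} : Finset α) ∉ ρ) :
    (C'.erase t).Nonempty := by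
  rw [Finset.nonempty_iff_ne_empty]
  intro h
  rcases (Finset.erase_eq_empty_iff C' t).mp h with h' | h'
  · exact hρ.2.1 (h' ▸ hC')
  · exact hst (h' ▸ hC')

lemma erase_t_not_mem {u : Finset α} {ρ : Finset (Finset α)} (hρ : IsPartOn u ρ)
    {C' : Finset α} {t : α} (hC' : C' ∈ ρ) (htC' : t ∈ C') (hst : ({t} : Finset α) ∉ ρ) :
    C'.erase t ∉ ρ.erase C' := by
  intro h
  obtain ⟨a, ha⟩ := erase_t_nonempty hρ hC' htC' hst
  have haC' : a ∈ C' := Finset.mem_of_mem_erase ha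
  have := hρ.eq_of_mem (Finset.mem_of_mem_erase h) hC' ha haC'
  exact (Finset.ne_of_mem_erase h) this

/-- removing `t` from its (non-singleton) block gives a partition of `s` -/
lemma isPartOn_remove {s : Finset α} {ρ : Finset (Finset α)} {t : α}
    (hρ : IsPartOn (insert t s) ρ) (ht : t ∉ s) {C' : Finset α} (hC' : C' ∈ ρ) (htC' : t ∈ C')
    (hst : ({t} : Finset α) ∉ ρ) :
    IsPartOn s (insert (C'.erase t) (ρ.erase C')) := by
  have htblk : ∀ B ∈ ρ, B ≠ C' → t ∉ B := by
    intro B hB hne htB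
    exact hne (hρ.eq_of_mem hB hC' htB htC')
  refine ⟨?_, ?_, ?_⟩
  · intro B hB
    intro a haB
    have hats : a ∈ insert t s := by
      rcases Finset.mem_insert.mp hB with rfl | hB'
      · exact hρ.bsubset hC' (Finset.mem_of_mem_erase haB)
      · exact hρ.bsubset (Finset.mem_of_mem_erase hB') haB
    rcases Finset.mem_insert.mp hats with heq | h
    · exfalso
      subst heq
      rcases Finset.mem_insert.mp hB with rfl | hB'
      · exact Finset.notMem_erase a C' haB
      · exact htblk B (Finset.mem_of_mem_erase hB') (Finset.ne_of_mem_erase hB') haB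
    · exact h
  · intro h
    rcases Finset.mem_insert.mp h with h | h
    · exact (erase_t_nonempty hρ hC' htC' hst).ne_empty h.symm
    · exact hρ.2.1 (Finset.mem_of_mem_erase h)
  · intro a ha
    have ha' : a ∈ insert t s := Finset.mem_insert_of_mem ha
    have hat : a ≠ t := fun h => ht (h ▸ ha)
    obtain ⟨B, ⟨hB, haB⟩, hu⟩ := hρ.2.2 a ha'
    by_cases hBC : B = C'
    · subst hBC
      refine ⟨B.erase t, ⟨Finset.mem_insert_self _ _, Finset.mem_erase.mpr ⟨hat, haB⟩⟩, ?_⟩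
      rintro D ⟨hD, haD⟩
      rcases Finset.mem_insert.mp hD with rfl | hD
      · rfl
      · exact absurd (hu D ⟨Finset.mem_of_mem_erase hD, haD⟩) (Finset.ne_of_mem_erase hD)
    · refine ⟨B, ⟨Finset.mem_insert_of_mem (Finset.mem_erase.mpr ⟨hBC, hB⟩), haB⟩, ?_⟩
      rintro D ⟨hD, haD⟩
      rcases Finset.mem_insert.mp hD with rfl | hD
      · exact absurd (hu C' ⟨hC', Finset.mem_of_mem_erase haD⟩).symm hBC
      · exact hu D ⟨Finset.mem_of_mem_erase hD, haD⟩

lemma sum_parts_insert (s : Finset α) (t : α) (ht : t ∉ s) (f : Finset (Finset α) → ℝ) :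
    ∑ ρ ∈ parts (insert t s), f ρ =
      ∑ τ ∈ parts s, (f (insert {t} τ) + ∑ C ∈ τ, f (insert (insert t C) (τ.erase C))) := by
  rw [← Finset.sum_filter_add_sum_filter_not (parts (insert t s)) (fun ρ => {t} ∈ ρ) f,
    Finset.sum_add_distrib]
  congr 1
  · -- singleton part
    refine Finset.sum_bij' (i := fun ρ _ => ρ.erase ({t} : Finset α))
      (j := fun τ _ => insert ({t} : Finset α) τ) ?_ ?_ ?_ ?_ ?_
    · -- hi : erase lands in parts s
      intro ρ hρ
      rw [Finset.mem_filter] at hρ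
      obtain ⟨hρp, hmem⟩ := hρ
      rw [mem_parts] at hρp
      rw [mem_parts]
      refine ⟨?_, ?_, ?_⟩
      · intro B hB
        have hB' := Finset.mem_of_mem_erase hB
        have hBne := Finset.ne_of_mem_erase hB
        intro a haB
        have ha := hρp.bsubset hB' haB
        rcases Finset.mem_insert.mp ha with rfl | h
        · exact absurd (hρp.eq_of_mem hB' hmem haB (Finset.mem_singleton_self a)) hBne
        · exact h
      · intro h; exact hρp.2.1 (Finset.mem_of_mem_erase h)
      · intro a ha
        obtain ⟨B, ⟨hB, haB⟩, hu⟩ := hρp.2.2 a (Finset.mem_insert_of_mem ha)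
        have hBne : B ≠ {t} := by
          rintro rfl
          exact ht ((Finset.mem_singleton.mp haB) ▸ ha)
        refine ⟨B, ⟨Finset.mem_erase.mpr ⟨hBne, hB⟩, haB⟩, ?_⟩
        rintro D ⟨hD, haD⟩
        exact hu D ⟨Finset.mem_of_mem_erase hD, haD⟩
    · -- hj : insert lands in filter
      intro τ hτ
      rw [mem_parts] at hτ
      rw [Finset.mem_filter, mem_parts]
      exact ⟨isPartOn_insert_singleton hτ ht, Finset.mem_insert_self _ _⟩
    · -- left_inv
      intro ρ hρ
      rw [Finset.mem_filter] at hρ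
      exact Finset.insert_erase hρ.2
    · -- right_inv
      intro τ hτ
      rw [mem_parts] at hτ
      exact Finset.erase_insert (singleton_not_mem hτ ht)
    · -- h : value compat
      intro ρ hρ
      rw [Finset.mem_filter] at hρ
      rw [Finset.insert_erase hρ.2]
  · -- block-join part
    rw [← Finset.sum_sigma (parts s) (fun τ => τ)
      (fun p => f (insert (insert t p.2) (p.1.erase p.2)))]
    have hblk : ∀ ρ ∈ Finset.filter (fun ρ => ({t} : Finset α) ∉ ρ) (parts (insert t s)),
        blockOf ρ t ∈ ρ ∧ t ∈ blockOf ρ t := by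
      intro ρ hρ
      rw [Finset.mem_filter, mem_parts] at hρ
      obtain ⟨C'', ⟨hC'', htC''⟩, -⟩ := hρ.1.2.2 t (Finset.mem_insert_self t s)
      rw [blockOf_eq hρ.1 hC'' htC'']
      exact ⟨hC'', htC''⟩
    refine Finset.sum_bij' (i := fun ρ _ =>
        (⟨insert ((blockOf ρ t).erase t) (ρ.erase (blockOf ρ t)), (blockOf ρ t).erase t⟩ :
          Σ _τ : Finset (Finset α), Finset α))
      (j := fun p _ => insert (insert t p.2) (p.1.erase p.2)) ?_ ?_ ?_ ?_ ?_
    · -- hi : lands in sigma set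
      intro ρ hρ
      obtain ⟨hC', htC'⟩ := hblk ρ hρ
      rw [Finset.mem_filter, mem_parts] at hρ
      rw [Finset.mem_sigma, mem_parts]
      exact ⟨isPartOn_remove hρ.1 ht hC' htC' hρ.2, Finset.mem_insert_self _ _⟩
    · -- hj
      rintro ⟨τ, C⟩ hp
      rw [Finset.mem_sigma, mem_parts] at hp
      obtain ⟨hτ, hC⟩ := hp
      rw [Finset.mem_filter, mem_parts]
      refine ⟨isPartOn_insert_block hτ ht hC, ?_⟩
      intro hmem
      rcases Finset.mem_insert.mp hmem with h | h
      · obtain ⟨a, haC⟩ := hτ.bnonempty hC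
        have : a ∈ ({t} : Finset α) := h ▸ Finset.mem_insert_of_mem haC
        exact (mem_not_mem_block hτ ht hC) ((Finset.mem_singleton.mp this) ▸ haC)
      · exact singleton_not_mem hτ ht (Finset.mem_of_mem_erase h)
    · -- left_inv : reconstruction
      intro ρ hρ
      obtain ⟨hC', htC'⟩ := hblk ρ hρ
      rw [Finset.mem_filter, mem_parts] at hρ
      simp only
      rw [Finset.erase_insert (erase_t_not_mem hρ.1 hC' htC' hρ.2),
        Finset.insert_erase htC', Finset.insert_erase hC']
    · -- right_inv
      rintro ⟨τ, C⟩ hp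
      rw [Finset.mem_sigma, mem_parts] at hp
      obtain ⟨hτ, hC⟩ := hp
      have htC : t ∉ C := mem_not_mem_block hτ ht hC
      have hρ' := isPartOn_insert_block hτ ht hC
      have hb : blockOf (insert (insert t C) (τ.erase C)) t = insert t C :=
        blockOf_eq hρ' (Finset.mem_insert_self _ _) (Finset.mem_insert_self _ _)
      have hnm : insert t C ∉ τ.erase C := by
        intro h
        exact (mem_not_mem_block hτ ht (Finset.mem_of_mem_erase h)) (Finset.mem_insert_self t C)
      simp only
      rw [hb, Finset.erase_insert htC, Finset.erase_insert hnm, Finset.insert_erase hC]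
    · -- h : value compat
      intro ρ hρ
      obtain ⟨hC', htC'⟩ := hblk ρ hρ
      rw [Finset.mem_filter, mem_parts] at hρ
      simp only
      rw [Finset.erase_insert (erase_t_not_mem hρ.1 hC' htC' hρ.2),
        Finset.insert_erase htC', Finset.insert_erase hC']

lemma restrictPart_insert_singleton {τ : Finset (Finset α)} {t : α} {O : Finset α}
    (htO : t ∉ O) : restrictPart (insert {t} τ) O = restrictPart τ O := by
  unfold restrictPart
  rw [Finset.image_insert]
  have : ({t} : Finset α) ∩ O = ∅ := by
    rw [Finset.singleton_inter_of_notMem htO]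
  rw [this, Finset.erase_insert_eq_erase]

lemma restrictPart_insert_block {τ : Finset (Finset α)} {t : α} {C : Finset α} {O : Finset α}
    (htO : t ∉ O) (hC : C ∈ τ) :
    restrictPart (insert (insert t C) (τ.erase C)) O = restrictPart τ O := by
  unfold restrictPart
  congr 1
  conv_rhs => rw [← Finset.insert_erase hC]
  rw [Finset.image_insert, Finset.image_insert]
  congr 1
  rw [Finset.insert_inter_of_notMem htO]

lemma restrictPart_self {O : Finset α} {ρ : Finset (Finset α)} (hρ : IsPartOn O ρ) :
    restrictPart ρ O = ρ := by
  unfold restrictPart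
  have himg : ρ.image (fun C => C ∩ O) = ρ := by
    have : ∀ C ∈ ρ, C ∩ O = C := fun C hC => Finset.inter_eq_left.mpr (hρ.bsubset hC)
    rw [Finset.image_congr (fun C hC => this C hC)]
    simp
  rw [himg, Finset.erase_eq_of_notMem hρ.2.1]

lemma card_restrictPart_le {ρ : Finset (Finset α)} {O : Finset α} :
    (restrictPart ρ O).card ≤ ρ.card := by
  unfold restrictPart
  exact le_trans (Finset.card_erase_le) (Finset.card_image_le)

/-- the partial sums in the master induction -/
def Uaux (σ : ℝ) (O : Finset α) (π cs : Finset (Finset α)) (S : Finset α) (k : ℕ) : ℝ :=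
  ∑ ρ ∈ parts (O ∪ S),
    if restrictPart ρ O = π ∧ (∀ C ∈ ρ, ∀ B ∈ cs, B ⊆ C → C ⊆ O) ∧ ρ.card = π.card + k
    then ∏ C ∈ ρ, risingFac (1 - σ) (C.card - 1) else 0

lemma Uaux_empty (σ : ℝ) (O : Finset α) (π cs : Finset (Finset α)) (hπ : IsPartOn O π) (k : ℕ) :
    Uaux σ O π cs ∅ k = if k = 0 then ∏ C ∈ π, risingFac (1 - σ) (C.card - 1) else 0 := by
  unfold Uaux
  rw [Finset.union_empty]
  rw [Finset.sum_eq_single_of_mem π (mem_parts.mpr hπ)]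
  · have hres : restrictPart π O = π := restrictPart_self hπ
    by_cases hk : k = 0
    · subst hk
      rw [if_pos ⟨hres, fun C hC B hB hBC => hπ.bsubset hC, by omega⟩, if_pos rfl]
    · rw [if_neg, if_neg hk]
      rintro ⟨-, -, hcard⟩
      omega
  · intro ρ hρ hne
    rw [if_neg]
    rintro ⟨hres, -, -⟩
    rw [restrictPart_self (mem_parts.mp hρ)] at hres
    exact hne hres

/-- the blocks of τ containing a forbidden block are exactly the forbidden blocks -/
lemma filter_forb_eq {O : Finset α} {π cs τ : Finset (Finset α)} (hπ : IsPartOn O π)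
    (hcs : cs ⊆ π) {S : Finset α} (hτ : IsPartOn (O ∪ S) τ)
    (hres : restrictPart τ O = π) (hforb : ∀ C ∈ τ, ∀ B ∈ cs, B ⊆ C → C ⊆ O) :
    τ.filter (fun C => ∃ B ∈ cs, B ⊆ C) = cs := by
  ext C
  rw [Finset.mem_filter]
  constructor
  · rintro ⟨hCτ, B, hB, hBC⟩
    have hCO : C ⊆ O := hforb C hCτ B hB hBC
    have hCne : C.Nonempty := hτ.bnonempty hCτ
    have hCπ : C ∈ π := by
      rw [← hres]
      unfold restrictPart
      exact Finset.mem_erase.mpr ⟨hCne.ne_empty,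
        Finset.mem_image.mpr ⟨C, hCτ, Finset.inter_eq_left.mpr hCO⟩⟩
    obtain ⟨a, haB⟩ := hπ.bnonempty (hcs hB)
    have : B = C := hπ.eq_of_mem (hcs hB) hCπ haB (hBC haB)
    exact this ▸ hB
  · intro hC
    have hCπ : C ∈ π := hcs hC
    have : C ∈ restrictPart τ O := hres.symm ▸ hCπ
    unfold restrictPart at this
    rw [Finset.mem_erase, Finset.mem_image] at this
    obtain ⟨hCne, D, hDτ, hDO⟩ := this
    have hCD : C ⊆ D := hDO ▸ Finset.inter_subset_left
    have hDOsub : D ⊆ O := hforb D hDτ C hC hCD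
    have hDC : D = C := by rw [← hDO, Finset.inter_eq_left.mpr hDOsub]
    rw [hDC] at hDτ
    exact ⟨hDτ, C, hC, Finset.Subset.refl C⟩

section Rec
variable {O : Finset α} {π cs : Finset (Finset α)} {S : Finset α} {t : α}

lemma claim1 (σ : ℝ) (hπ : IsPartOn O π) (hcs : cs ⊆ π) (htO : t ∉ O)
    (htOS : t ∉ O ∪ S) {τ : Finset (Finset α)} (hτ : IsPartOn (O ∪ S) τ) (k : ℕ) :
    (if restrictPart (insert {t} τ) O = π ∧
        (∀ C ∈ insert ({t} : Finset α) τ, ∀ B ∈ cs, B ⊆ C → C ⊆ O) ∧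
        (insert ({t} : Finset α) τ).card = π.card + k
      then ∏ C ∈ insert ({t} : Finset α) τ, risingFac (1 - σ) (C.card - 1) else 0) =
    (if restrictPart τ O = π ∧ (∀ C ∈ τ, ∀ B ∈ cs, B ⊆ C → C ⊆ O) ∧
        τ.card + 1 = π.card + k
      then ∏ C ∈ τ, risingFac (1 - σ) (C.card - 1) else 0) := by
  have hnm : ({t} : Finset α) ∉ τ := singleton_not_mem hτ htOS
  have hcard : (insert ({t} : Finset α) τ).card = τ.card + 1 :=
    Finset.card_insert_of_notMem hnm
  have hforb : (∀ C ∈ insert ({t} : Finset α) τ, ∀ B ∈ cs, B ⊆ C → C ⊆ O) ↔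
      (∀ C ∈ τ, ∀ B ∈ cs, B ⊆ C → C ⊆ O) := by
    constructor
    · intro h C hC; exact h C (Finset.mem_insert_of_mem hC)
    · intro h C hC
      rcases Finset.mem_insert.mp hC with rfl | hC
      · intro B hB hBC
        obtain ⟨a, haB⟩ := hπ.bnonempty (hcs hB)
        have haO : a ∈ O := hπ.bsubset (hcs hB) haB
        have : a = t := Finset.mem_singleton.mp (hBC haB)
        exact absurd (this ▸ haO) htO
      · exact h C hC
  have hprod : ∏ C ∈ insert ({t} : Finset α) τ, risingFac (1 - σ) (C.card - 1) =
      ∏ C ∈ τ, risingFac (1 - σ) (C.card - 1) := by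
    rw [Finset.prod_insert hnm]
    simp [risingFac_zero]
  refine if_congr ?_ hprod rfl
  rw [restrictPart_insert_singleton htO, hforb, hcard]

lemma claim2 (σ : ℝ) (hπ : IsPartOn O π) (hcs : cs ⊆ π) (htO : t ∉ O)
    (htOS : t ∉ O ∪ S) {τ : Finset (Finset α)} (hτ : IsPartOn (O ∪ S) τ)
    {C : Finset α} (hC : C ∈ τ) (k : ℕ) :
    (if restrictPart (insert (insert t C) (τ.erase C)) O = π ∧
        (∀ D ∈ insert (insert t C) (τ.erase C), ∀ B ∈ cs, B ⊆ D → D ⊆ O) ∧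
        (insert (insert t C) (τ.erase C)).card = π.card + k
      then ∏ D ∈ insert (insert t C) (τ.erase C), risingFac (1 - σ) (D.card - 1) else 0) =
    (if restrictPart τ O = π ∧ (∀ D ∈ τ, ∀ B ∈ cs, B ⊆ D → D ⊆ O) ∧
        τ.card = π.card + k
      then (if ¬ ∃ B ∈ cs, B ⊆ C then
        ((C.card : ℝ) - σ) * ∏ D ∈ τ, risingFac (1 - σ) (D.card - 1) else 0) else 0) := by
  have htC : t ∉ C := mem_not_mem_block hτ htOS hC
  have htCO : ¬ insert t C ⊆ O := fun h => htO (h (Finset.mem_insert_self t C))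
  have hnm : insert t C ∉ τ.erase C := fun h =>
    (mem_not_mem_block hτ htOS (Finset.mem_of_mem_erase h)) (Finset.mem_insert_self t C)
  have hcne : C.Nonempty := hτ.bnonempty hC
  have hcpos : 1 ≤ C.card := Finset.card_pos.mpr hcne
  have hτpos : 1 ≤ τ.card := Finset.card_pos.mpr ⟨C, hC⟩
  have hcard : (insert (insert t C) (τ.erase C)).card = τ.card := by
    rw [Finset.card_insert_of_notMem hnm, Finset.card_erase_of_mem hC]
    omega
  have hsub : ∀ B ∈ cs, (B ⊆ insert t C ↔ B ⊆ C) := by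
    intro B hB
    constructor
    · intro h a haB
      rcases Finset.mem_insert.mp (h haB) with rfl | h'
      · exact absurd (hπ.bsubset (hcs hB) haB) htO
      · exact h'
    · intro h; exact h.trans (Finset.subset_insert t C)
  have hforb : (∀ D ∈ insert (insert t C) (τ.erase C), ∀ B ∈ cs, B ⊆ D → D ⊆ O) ↔
      ((∀ D ∈ τ, ∀ B ∈ cs, B ⊆ D → D ⊆ O) ∧ ¬ ∃ B ∈ cs, B ⊆ C) := by
    constructor
    · intro h
      have hnoB : ¬ ∃ B ∈ cs, B ⊆ C := by
        rintro ⟨B, hB, hBC⟩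
        exact htCO (h (insert t C) (Finset.mem_insert_self _ _) B hB
          ((hsub B hB).mpr hBC))
      refine ⟨?_, hnoB⟩
      intro D hD B hB hBD
      by_cases hDC : D = C
      · exact absurd ⟨B, hB, hDC ▸ hBD⟩ hnoB
      · exact h D (Finset.mem_insert_of_mem (Finset.mem_erase.mpr ⟨hDC, hD⟩)) B hB hBD
    · rintro ⟨h, hnoB⟩ D hD B hB hBD
      rcases Finset.mem_insert.mp hD with rfl | hD
      · exact absurd ⟨B, hB, (hsub B hB).mp hBD⟩ hnoB
      · exact h D (Finset.mem_of_mem_erase hD) B hB hBD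
  have hprod : ∏ D ∈ insert (insert t C) (τ.erase C), risingFac (1 - σ) (D.card - 1) =
      ((C.card : ℝ) - σ) * ∏ D ∈ τ, risingFac (1 - σ) (D.card - 1) := by
    rw [Finset.prod_insert hnm, ← Finset.mul_prod_erase τ _ hC]
    have h1 : (insert t C).card - 1 = (C.card - 1) + 1 := by
      rw [Finset.card_insert_of_notMem htC]; omega
    rw [h1, risingFac_succ]
    have h2 : (1 - σ + ((C.card - 1 : ℕ) : ℝ)) = (C.card : ℝ) - σ := by
      have : ((C.card - 1 : ℕ) : ℝ) = (C.card : ℝ) - 1 := by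
        push_cast [Nat.cast_sub hcpos]; ring
      rw [this]; ring
    rw [h2]; ring
  by_cases hcond : restrictPart τ O = π ∧ (∀ D ∈ τ, ∀ B ∈ cs, B ⊆ D → D ⊆ O) ∧
      τ.card = π.card + k
  · rw [if_pos hcond]
    by_cases hok : ∃ B ∈ cs, B ⊆ C
    · rw [if_neg, if_neg (by exact fun h => h hok)]
      rintro ⟨-, hf, -⟩
      exact (hforb.mp hf).2 hok
    · rw [if_pos, if_pos (by exact hok)]
      · exact hprod
      · exact ⟨(restrictPart_insert_block htO hC) ▸ hcond.1,
          hforb.mpr ⟨hcond.2.1, hok⟩, hcard ▸ hcond.2.2⟩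
  · rw [if_neg, if_neg hcond]
    rintro ⟨hres, hf, hcd⟩
    exact hcond ⟨(restrictPart_insert_block htO hC) ▸ hres,
      (hforb.mp hf).1, hcard ▸ hcd⟩

end Rec

section Rec2
variable {O : Finset α} {π cs : Finset (Finset α)} {S : Finset α} {t : α}

lemma Uaux_insert (σ : ℝ) (hπ : IsPartOn O π) (hcs : cs ⊆ π) (htO : t ∉ O) (htS : t ∉ S)
    (hOS : Disjoint O S) (k : ℕ) :
    Uaux σ O π cs (insert t S) k =
      (if k = 0 then 0 else Uaux σ O π cs S (k - 1)) +
        ((S.card : ℝ) - (k : ℝ) * σ + ∑ B ∈ π \ cs, ((B.card : ℝ) - σ)) *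
          Uaux σ O π cs S k := by
  have htOS : t ∉ O ∪ S := by
    rw [Finset.mem_union]; rintro (h | h); exacts [htO h, htS h]
  have hUnion : O ∪ insert t S = insert t (O ∪ S) := by rw [Finset.union_insert]
  set coeff : ℝ := (S.card : ℝ) - (k : ℝ) * σ + ∑ B ∈ π \ cs, ((B.card : ℝ) - σ) with hcoeff
  unfold Uaux
  rw [hUnion, sum_parts_insert (O ∪ S) t htOS]
  have step : ∀ τ ∈ parts (O ∪ S),
      ((if restrictPart (insert {t} τ) O = π ∧
          (∀ C ∈ insert ({t} : Finset α) τ, ∀ B ∈ cs, B ⊆ C → C ⊆ O) ∧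
          (insert ({t} : Finset α) τ).card = π.card + k
        then ∏ C ∈ insert ({t} : Finset α) τ, risingFac (1 - σ) (C.card - 1) else 0) +
      ∑ C ∈ τ, (if restrictPart (insert (insert t C) (τ.erase C)) O = π ∧
          (∀ D ∈ insert (insert t C) (τ.erase C), ∀ B ∈ cs, B ⊆ D → D ⊆ O) ∧
          (insert (insert t C) (τ.erase C)).card = π.card + k
        then ∏ D ∈ insert (insert t C) (τ.erase C), risingFac (1 - σ) (D.card - 1) else 0)) =
      ((if restrictPart τ O = π ∧ (∀ C ∈ τ, ∀ B ∈ cs, B ⊆ C → C ⊆ O) ∧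
          τ.card + 1 = π.card + k
        then ∏ C ∈ τ, risingFac (1 - σ) (C.card - 1) else 0) +
      coeff * (if restrictPart τ O = π ∧ (∀ C ∈ τ, ∀ B ∈ cs, B ⊆ C → C ⊆ O) ∧
          τ.card = π.card + k
        then ∏ C ∈ τ, risingFac (1 - σ) (C.card - 1) else 0)) := by
    intro τ hτm
    have hτ : IsPartOn (O ∪ S) τ := mem_parts.mp hτm
    congr 1
    · exact claim1 σ hπ hcs htO htOS hτ k
    · rw [Finset.sum_congr rfl (fun C hC => claim2 σ hπ hcs htO htOS hτ hC k)]
      by_cases hcond : restrictPart τ O = π ∧ (∀ D ∈ τ, ∀ B ∈ cs, B ⊆ D → D ⊆ O) ∧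
          τ.card = π.card + k
      · rw [if_pos hcond]
        simp only [if_pos hcond]
        rw [← Finset.sum_filter]
        have hfe : τ.filter (fun C => ∃ B ∈ cs, B ⊆ C) = cs :=
          filter_forb_eq hπ hcs hτ hcond.1 hcond.2.1
        have hcsτ : cs ⊆ τ := by
          rw [← hfe]; exact Finset.filter_subset _ _
        rw [Finset.filter_not, hfe]
        rw [← Finset.sum_mul, Finset.sum_sdiff_eq_sub hcsτ]
        congr 1
        have h1 : ∑ C ∈ τ, ((C.card : ℝ) - σ) = ((O.card + S.card : ℕ) : ℝ) - (τ.card : ℝ) * σ := by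
          rw [Finset.sum_sub_distrib, Finset.sum_const, ← Nat.cast_sum]
          rw [hτ.sum_card, Finset.card_union_of_disjoint hOS]
          simp [nsmul_eq_mul]
        have h2 : ∑ B ∈ π \ cs, ((B.card : ℝ) - σ)
            = ∑ B ∈ π, ((B.card : ℝ) - σ) - ∑ B ∈ cs, ((B.card : ℝ) - σ) :=
          Finset.sum_sdiff_eq_sub hcs
        have h3 : ∑ B ∈ π, ((B.card : ℝ) - σ) = ((O.card : ℕ) : ℝ) - (π.card : ℝ) * σ := by
          rw [Finset.sum_sub_distrib, Finset.sum_const, ← Nat.cast_sum]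
          rw [hπ.sum_card]
          simp [nsmul_eq_mul]
        have h4 : (τ.card : ℝ) = (π.card : ℝ) + (k : ℝ) := by
          rw [hcond.2.2]; push_cast; ring
        rw [h1, hcoeff, h2, h3, h4]
        push_cast
        ring
      · rw [if_neg hcond, mul_zero]
        apply Finset.sum_eq_zero
        intro C hC
        rw [if_neg hcond]
  rw [Finset.sum_congr rfl step, Finset.sum_add_distrib, ← Finset.mul_sum]
  congr 1
  rcases Nat.eq_zero_or_pos k with rfl | hk
  · rw [if_pos rfl]
    apply Finset.sum_eq_zero
    intro τ hτm
    rw [if_neg]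
    rintro ⟨hres, -, hcard⟩
    have : π.card ≤ τ.card := hres ▸ card_restrictPart_le
    omega
  · rw [if_neg (by omega)]
    apply Finset.sum_congr rfl
    intro τ hτm
    refine if_congr (and_congr_right fun _ => and_congr_right fun _ => ?_) rfl rfl
    omega

lemma Uaux_main (σ : ℝ) (hσ : σ ≠ 0) (hπ : IsPartOn O π) (hcs : cs ⊆ π) :
    ∀ S : Finset α, Disjoint O S → ∀ k : ℕ,
      Uaux σ O π cs S k =
        (∏ C ∈ π, risingFac (1 - σ) (C.card - 1)) *
          gfc S.card k σ (-(∑ B ∈ π \ cs, ((B.card : ℝ) - σ))) / σ ^ k := by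
  intro S
  induction S using Finset.induction_on with
  | empty =>
    intro _ k
    rw [Uaux_empty σ O π cs hπ k]
    rcases Nat.eq_zero_or_pos k with rfl | hk
    · rw [if_pos rfl, Finset.card_empty, gfc_zero_zero]
      simp
    · obtain ⟨k', rfl⟩ : ∃ k', k = k' + 1 := ⟨k - 1, by omega⟩
      rw [if_neg (by omega), Finset.card_empty, gfc_zero_succ]
      simp
  | @insert t S htS ih =>
    intro hdisj k
    have hOS : Disjoint O S := by
      refine Finset.disjoint_left.mpr (fun a ha haS => ?_)
      exact Finset.disjoint_left.mp hdisj ha (Finset.mem_insert_of_mem haS)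
    have htO : t ∉ O := fun h =>
      Finset.disjoint_left.mp hdisj h (Finset.mem_insert_self t S)
    have hSc : (insert t S).card = S.card + 1 := Finset.card_insert_of_notMem htS
    rw [Uaux_insert σ hπ hcs htO htS hOS k, hSc]
    set γ : ℝ := -(∑ B ∈ π \ cs, ((B.card : ℝ) - σ)) with hγ
    have hcoeff : (S.card : ℝ) - (k : ℝ) * σ + ∑ B ∈ π \ cs, ((B.card : ℝ) - σ)
        = (S.card : ℝ) - (k : ℝ) * σ - γ := by rw [hγ]; ring
    rcases Nat.eq_zero_or_pos k with rfl | hk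
    · rw [if_pos rfl, ih hOS 0, gfc_succ_zero]
      rw [hcoeff]
      field_simp
      ring
    · obtain ⟨k', rfl⟩ : ∃ k', k = k' + 1 := ⟨k - 1, by omega⟩
      rw [if_neg (by omega)]
      simp only [Nat.add_sub_cancel]
      rw [ih hOS k', ih hOS (k' + 1), gfc_succ_succ, hcoeff]
      have hσp : σ ^ (k' + 1) ≠ 0 := pow_ne_zero _ hσ
      field_simp
      push_cast
      ring

end Rec2

end Aux2

section Aux3
variable {ι : Type*} [Fintype ι] [DecidableEq ι]

lemma card_supersets (c : Finset ι) (r : ℕ) (hcr : c.card ≤ r) :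
    (((Finset.univ : Finset ι).powersetCard r).filter (fun T => c ⊆ T)).card =
      (Fintype.card ι - c.card).choose (r - c.card) := by
  have key : (((Finset.univ : Finset ι).powersetCard r).filter (fun T => c ⊆ T)).card =
      ((Finset.univ \ c).powersetCard (r - c.card)).card := by
    apply Finset.card_bij (fun T _ => T \ c)
    · intro T hT
      rw [Finset.mem_filter, Finset.mem_powersetCard] at hT
      obtain ⟨⟨hTu, hTc⟩, hcT⟩ := hT
      rw [Finset.mem_powersetCard]
      refine ⟨Finset.sdiff_subset_sdiff hTu (Finset.Subset.refl c), ?_⟩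
      rw [Finset.card_sdiff_of_subset hcT, hTc]
    · intro T hT T' hT' h
      rw [Finset.mem_filter] at hT hT'
      rw [← Finset.sdiff_union_of_subset hT.2, ← Finset.sdiff_union_of_subset hT'.2, h]
    · intro T' hT'
      rw [Finset.mem_powersetCard] at hT'
      obtain ⟨hT'u, hT'c⟩ := hT'
      have hdisj : Disjoint T' c := by
        refine Finset.disjoint_left.mpr (fun a ha hac => ?_)
        exact (Finset.mem_sdiff.mp (hT'u ha)).2 hac
      refine ⟨T' ∪ c, ?_, ?_⟩
      · rw [Finset.mem_filter, Finset.mem_powersetCard]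
        refine ⟨⟨Finset.subset_univ _, ?_⟩, Finset.subset_union_right⟩
        rw [Finset.card_union_of_disjoint hdisj, hT'c]
        omega
      · rw [Finset.union_sdiff_cancel_right hdisj]
  rw [key, Finset.card_powersetCard, Finset.card_sdiff_of_subset (Finset.subset_univ c), Finset.card_univ]

lemma ibinom_eq_choose {v r j : ℕ} (hvr : v ≤ r) (hvj : v ≤ j) :
    ibinom ((j : ℤ) - v) ((r : ℤ) - v) = ((j - v).choose (r - v) : ℝ) := by
  unfold ibinom
  rcases le_or_gt r j with h | h
  · rw [if_pos ⟨by omega, by omega⟩]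
    have h1 : ((j : ℤ) - v) = ((j - v : ℕ) : ℤ) := by omega
    have h2 : ((r : ℤ) - v) = ((r - v : ℕ) : ℤ) := by omega
    rw [h1, h2, Int.toNat_natCast, Int.toNat_natCast]
  · rw [if_neg (by omega), Nat.choose_eq_zero_of_lt (by omega)]
    simp

lemma ibinom_as_sum {v r : ℕ} (hvr : v ≤ r) {c : Finset ι} (hc : c.card = v) :
    ibinom ((Fintype.card ι : ℤ) - v) ((r : ℤ) - v) =
      ∑ T ∈ (Finset.univ : Finset ι).powersetCard r, (if c ⊆ T then (1 : ℝ) else 0) := by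
  rw [Finset.sum_boole]
  subst hc
  rw [card_supersets c r hvr, ibinom_eq_choose hvr (Finset.card_le_univ c)]

lemma inner_collapse (W : Finset ι) (r : ℕ) (hW : W.card ≤ r) :
    ∑ v ∈ Finset.range (r + 1), ∑ c ∈ (Finset.univ : Finset ι).powersetCard v,
        ((-1 : ℝ) ^ v * if c ⊆ W then (1 : ℝ) else 0) =
      if W = ∅ then 1 else 0 := by
  have h1 : ∀ v, ∑ c ∈ (Finset.univ : Finset ι).powersetCard v,
      ((-1 : ℝ) ^ v * if c ⊆ W then (1 : ℝ) else 0) =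
      (-1 : ℝ) ^ v * (W.card.choose v : ℝ) := by
    intro v
    rw [← Finset.mul_sum, Finset.sum_boole]
    have he : (((Finset.univ : Finset ι).powersetCard v).filter (fun c => c ⊆ W)) =
        W.powersetCard v := by
      ext c
      simp only [Finset.mem_filter, Finset.mem_powersetCard, Finset.subset_univ, true_and]
      tauto
    rw [he, Finset.card_powersetCard]
  rw [Finset.sum_congr rfl (fun v _ => h1 v)]
  have hsub : Finset.range (W.card + 1) ⊆ Finset.range (r + 1) := by
    apply Finset.range_subset_range.mpr; omega
  rw [← Finset.sum_subset hsub (fun v hv hv' => ?_)]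
  · have halt := Int.alternating_sum_range_choose (n := W.card)
    have hcast : ((∑ v ∈ Finset.range (W.card + 1),
        (-1 : ℤ) ^ v * (W.card.choose v : ℤ) : ℤ) : ℝ) =
        ∑ v ∈ Finset.range (W.card + 1), (-1 : ℝ) ^ v * (W.card.choose v : ℝ) := by
      push_cast; rfl
    rw [← hcast, halt]
    by_cases hWe : W = ∅
    · rw [if_pos hWe, if_pos (by simp [hWe]), Int.cast_one]
    · rw [if_neg hWe, if_neg (by simp [Finset.card_eq_zero, hWe]), Int.cast_zero]
  · rw [Nat.choose_eq_zero_of_lt (by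
      rw [Finset.mem_range] at hv hv'
      omega), Nat.cast_zero, mul_zero]

lemma CI (Z : Finset ι) (r : ℕ) :
    fallingFac ((Zᶜ.card : ℕ) : ℝ) r =
      (Nat.factorial r : ℝ) * ∑ v ∈ Finset.range (r + 1),
        ibinom ((Fintype.card ι : ℤ) - v) ((r : ℤ) - v) * (-1 : ℝ) ^ v *
          ∑ c ∈ (Finset.univ : Finset ι).powersetCard v, (if c ⊆ Z then (1 : ℝ) else 0) := by
  rw [fallingFac_nat_choose]
  congr 1
  symm
  have hind : ∀ (c T : Finset ι),
      (if c ⊆ Z then (1 : ℝ) else 0) * (if c ⊆ T then (1 : ℝ) else 0) =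
      (if c ⊆ Z ∩ T then (1 : ℝ) else 0) := by
    intro c T
    by_cases h1 : c ⊆ Z <;> by_cases h2 : c ⊆ T <;>
      simp [h1, h2, Finset.subset_inter_iff]
  calc ∑ v ∈ Finset.range (r + 1),
        ibinom ((Fintype.card ι : ℤ) - v) ((r : ℤ) - v) * (-1 : ℝ) ^ v *
          ∑ c ∈ (Finset.univ : Finset ι).powersetCard v, (if c ⊆ Z then (1 : ℝ) else 0)
      = ∑ v ∈ Finset.range (r + 1), ∑ c ∈ (Finset.univ : Finset ι).powersetCard v,
          ∑ T ∈ (Finset.univ : Finset ι).powersetCard r,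
            ((-1 : ℝ) ^ v * ((if c ⊆ Z then (1 : ℝ) else 0) *
              (if c ⊆ T then (1 : ℝ) else 0))) := by
        apply Finset.sum_congr rfl
        intro v hv
        rw [Finset.mem_range] at hv
        rw [Finset.mul_sum]
        apply Finset.sum_congr rfl
        intro c hc
        have hcv : c.card = v := (Finset.mem_powersetCard.mp hc).2
        rw [ibinom_as_sum (by omega) hcv, Finset.sum_mul, Finset.sum_mul]
        exact Finset.sum_congr rfl (fun T hT => by ring)
    _ = ∑ T ∈ (Finset.univ : Finset ι).powersetCard r, ∑ v ∈ Finset.range (r + 1),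
          ∑ c ∈ (Finset.univ : Finset ι).powersetCard v,
            ((-1 : ℝ) ^ v * (if c ⊆ Z ∩ T then (1 : ℝ) else 0)) := by
        rw [Finset.sum_congr rfl (fun v hv => Finset.sum_congr rfl (fun c hc =>
          Finset.sum_congr rfl (fun T hT => by rw [hind])))]
        rw [Finset.sum_congr rfl (fun v hv => Finset.sum_comm)]
        exact Finset.sum_comm
    _ = ∑ T ∈ (Finset.univ : Finset ι).powersetCard r,
          (if Z ∩ T = ∅ then (1 : ℝ) else 0) := by
        apply Finset.sum_congr rfl
        intro T hT
        have hTr : T.card = r := (Finset.mem_powersetCard.mp hT).2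
        exact inner_collapse (Z ∩ T) r (le_trans
          (Finset.card_le_card Finset.inter_subset_right) (le_of_eq hTr))
    _ = ((Zᶜ.card.choose r : ℕ) : ℝ) := by
        rw [Finset.sum_boole]
        have he : (((Finset.univ : Finset ι).powersetCard r).filter (fun T => Z ∩ T = ∅)) =
            Zᶜ.powersetCard r := by
          ext T
          simp only [Finset.mem_filter, Finset.mem_powersetCard, Finset.subset_univ, true_and,
            Finset.eq_empty_iff_forall_notMem, Finset.mem_inter, Finset.subset_iff,
            Finset.mem_compl, Finset.mem_univ]
          tauto
        rw [he, Finset.card_powersetCard]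


end Aux3

section Aux4
lemma algden (σ : ℝ) (hσ : σ ≠ 0) (V : ℕ → ℕ → ℝ)
    (hVrec : ∀ N k, 1 ≤ k → k ≤ N →
      V N k = V (N + 1) (k + 1) + ((N : ℝ) - (k : ℝ) * σ) * V (N + 1) k)
    (n j : ℕ) (hj1 : 1 ≤ j) (hjn : j ≤ n) :
    ∀ m : ℕ, ∑ k ∈ Finset.range (m + 1),
        V (n + m) (j + k) * gfc m k σ ((j : ℝ) * σ - (n : ℝ)) / σ ^ k = V n j := by
  intro m
  induction m with
  | zero => simp [gfc_zero_zero]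
  | succ m ih =>
    set γ : ℝ := (j : ℝ) * σ - (n : ℝ) with hγ
    rw [Finset.sum_range_succ' _ (m + 1)]
    -- terms k+1 for k ∈ range (m+1), plus k = 0 term
    have hk0 : V (n + (m + 1)) (j + 0) * gfc (m + 1) 0 σ γ / σ ^ 0
        = V (n + m + 1) j * (((m : ℝ) - γ) * gfc m 0 σ γ) := by
      rw [gfc_succ_zero]
      simp [Nat.add_assoc]
    have hksucc : ∀ k ∈ Finset.range (m + 1),
        V (n + (m + 1)) (j + (k + 1)) * gfc (m + 1) (k + 1) σ γ / σ ^ (k + 1)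
        = V (n + m + 1) (j + k + 1) * gfc m k σ γ / σ ^ k
          + V (n + m + 1) (j + k + 1) * (((m : ℝ) - ((k : ℝ) + 1) * σ - γ)
              * gfc m (k + 1) σ γ) / σ ^ (k + 1) := by
      intro k hk
      rw [gfc_succ_succ]
      have h1 : n + (m + 1) = n + m + 1 := by omega
      have h2 : j + (k + 1) = j + k + 1 := by omega
      rw [h1, h2]
      have : σ ^ (k + 1) = σ ^ k * σ := pow_succ σ k
      field_simp
      ring
    rw [Finset.sum_congr rfl hksucc, hk0, Finset.sum_add_distrib]
    -- second piece: reindex and absorb k = 0 term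
    have hB : ∑ k ∈ Finset.range (m + 1),
        V (n + m + 1) (j + k + 1) * (((m : ℝ) - ((k : ℝ) + 1) * σ - γ)
          * gfc m (k + 1) σ γ) / σ ^ (k + 1)
        + V (n + m + 1) j * (((m : ℝ) - γ) * gfc m 0 σ γ)
        = ∑ k ∈ Finset.range (m + 1),
            ((n : ℝ) + m - ((j : ℝ) + k) * σ) * V (n + m + 1) (j + k) * gfc m k σ γ / σ ^ k := by
      rw [Finset.sum_range_succ' (fun k =>
        ((n : ℝ) + m - ((j : ℝ) + k) * σ) * V (n + m + 1) (j + k) * gfc m k σ γ / σ ^ k) m]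
      have hlast : V (n + m + 1) (j + m + 1) * (((m : ℝ) - ((m : ℝ) + 1) * σ - γ)
          * gfc m (m + 1) σ γ) / σ ^ (m + 1) = 0 := by
        rw [gfc_eq_zero_of_lt (by omega)]
        simp
      rw [Finset.sum_range_succ, hlast, add_zero]
      congr 1
      · apply Finset.sum_congr rfl
        intro k hk
        have : ((m : ℝ) - ((k : ℝ) + 1) * σ - γ) = ((n : ℝ) + m - ((j : ℝ) + (k + 1)) * σ) := by
          rw [hγ]; push_cast; ring
        rw [this]
        push_cast
        ring
      · have : ((m : ℝ) - γ) = ((n : ℝ) + m - ((j : ℝ) + 0) * σ) := by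
          rw [hγ]; push_cast; ring
        rw [this]
        push_cast
        simp
        ring
    rw [add_assoc, hB, ← Finset.sum_add_distrib, ← ih]
    apply Finset.sum_congr rfl
    intro k hk
    rw [Finset.mem_range] at hk
    have hrec := hVrec (n + m) (j + k) (by omega) (by omega)
    have h1 : n + m + 1 = n + (m + 1) := by omega
    have h2 : j + k + 1 = j + (k + 1) := by omega
    rw [hrec]
    push_cast
    ring

end Aux4


section Glue

lemma card_oldSet (n m : ℕ) : (oldSet n m).card = n := by
  classical
  have h : oldSet n m = Finset.map (Fin.castAddEmb m) Finset.univ := by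
    ext x
    simp only [oldSet, Finset.mem_filter, Finset.mem_univ, true_and, Finset.mem_map]
    constructor
    · intro hx
      exact ⟨⟨(x : ℕ), hx⟩, Fin.ext rfl⟩
    · rintro ⟨y, -, rfl⟩
      exact y.isLt
  rw [h, Finset.card_map, Finset.card_univ, Fintype.card_fin]

lemma scount_eq_zero_iff {n m : ℕ} (Bi : Finset (Fin (n + m)))
    (ρ : Finset (Finset (Fin (n + m)))) :
    Scount n m Bi ρ = 0 ↔ ∀ C ∈ ρ, Bi ⊆ C → C ⊆ oldSet n m := by
  unfold Scount
  rw [Finset.sum_eq_zero_iff]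
  constructor
  · intro h C hC hBC
    have := h C (Finset.mem_filter.mpr ⟨hC, hBC⟩)
    rwa [Finset.card_eq_zero, Finset.sdiff_eq_empty_iff_subset] at this
  · intro h C hC
    rw [Finset.card_eq_zero, Finset.sdiff_eq_empty_iff_subset]
    exact h C (Finset.mem_filter.mp hC).1 (Finset.mem_filter.mp hC).2

lemma card_le_restr_add {α : Type*} [Fintype α] [DecidableEq α] {ρ : Finset (Finset α)}
    (hρ : IsPartOn Finset.univ ρ) (O : Finset α) :
    ρ.card ≤ (restrictPart ρ O).card + Oᶜ.card := by
  classical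
  have hsplit := Finset.card_filter_add_card_filter_not
    (s := ρ) (p := fun C => (C ∩ O).Nonempty)
  have h1 : (ρ.filter (fun C => (C ∩ O).Nonempty)).card ≤ (restrictPart ρ O).card := by
    apply Finset.card_le_card_of_injOn (fun C => C ∩ O)
    · intro C hC
      rw [Finset.mem_coe, Finset.mem_filter] at hC
      exact Finset.mem_erase.mpr ⟨hC.2.ne_empty, Finset.mem_image.mpr ⟨C, hC.1, rfl⟩⟩
    · intro C hC D hD hCD
      rw [Finset.mem_coe, Finset.mem_filter] at hC hD
      obtain ⟨a, ha⟩ := hC.2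
      have haD : a ∈ D ∩ O := by
        have : C ∩ O = D ∩ O := hCD
        exact this ▸ ha
      exact hρ.eq_of_mem hC.1 hD.1 (Finset.mem_inter.mp ha).1 (Finset.mem_inter.mp haD).1
  have h2 : (ρ.filter (fun C => ¬(C ∩ O).Nonempty)).card ≤ Oᶜ.card := by
    set ρ₂ := ρ.filter (fun C => ¬(C ∩ O).Nonempty) with hρ₂
    have hdisj : ∀ x ∈ ρ₂, ∀ y ∈ ρ₂, x ≠ y → Disjoint x y := fun x hx y hy hxy =>
      hρ.disj (Finset.mem_filter.mp hx).1 (Finset.mem_filter.mp hy).1 hxy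
    calc ρ₂.card = ∑ C ∈ ρ₂, 1 := by simp
      _ ≤ ∑ C ∈ ρ₂, C.card := Finset.sum_le_sum (fun C hC =>
          Finset.card_pos.mpr (hρ.bnonempty (Finset.mem_filter.mp hC).1))
      _ = (ρ₂.biUnion id).card := (Finset.card_biUnion hdisj).symm
      _ ≤ Oᶜ.card := Finset.card_le_card (by
          intro a ha
          rw [Finset.mem_biUnion] at ha
          obtain ⟨C, hC, haC⟩ := ha
          rw [Finset.mem_compl]
          intro haO
          exact (Finset.mem_filter.mp hC).2 ⟨a, Finset.mem_inter.mpr ⟨haC, haO⟩⟩)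
  omega

end Glue

/-- factorial moments of the number of re-observed old species,
given complete information. -/
theorem looking_backward_moments_complete
    (n m j : ℕ) (hn : 1 ≤ n) (hm : 1 ≤ m)
    (σ : ℝ) (hσ1 : σ < 1) (hσ0 : σ ≠ 0)
    (V : ℕ → ℕ → ℝ) (hV11 : V 1 1 = 1)
    (hVnn : ∀ N k, 1 ≤ k → k ≤ N → 0 ≤ V N k)
    (hVrec : ∀ N k, 1 ≤ k → k ≤ N →
      V N k = V (N + 1) (k + 1) + ((N : ℝ) - (k : ℝ) * σ) * V (N + 1) k)
    (B : Fin j → Finset (Fin (n + m))) (hBinj : Function.Injective B)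
    (hπ : IsPartOn (oldSet n m) (Finset.image B Finset.univ))
    (hVnj : 0 < V n j)
    (r : ℕ) (hr : 1 ≤ r) :
    condExpPi σ V n m (Finset.image B Finset.univ)
        (fun ρ => fallingFac (RcntB n m j B ρ : ℝ) r) =
      (Nat.factorial r : ℝ) *
        ∑ v ∈ Finset.range (r + 1),
          ibinom ((j : ℤ) - (v : ℤ)) ((r : ℤ) - (v : ℤ)) * (-1 : ℝ) ^ v *
            ∑ c ∈ (Finset.univ : Finset (Fin j)).powersetCard v,
              ∑ k ∈ Finset.range (m + 1),
                V (n + m) (j + k) / V n j *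
                  (gfc m k σ (-(n : ℝ) + (∑ i ∈ c, ((B i).card : ℝ)) + ((j : ℝ) - (v : ℝ)) * σ) /
                    σ ^ k) := by
  classical
  set O : Finset (Fin (n + m)) := oldSet n m with hOdef
  set π : Finset (Finset (Fin (n + m))) := Finset.image B Finset.univ with hπdef
  set Q : ℝ := ∏ C ∈ π, risingFac (1 - σ) (C.card - 1) with hQ
  have huniv : O ∪ Oᶜ = Finset.univ := Finset.union_compl O
  have hOcard : O.card = n := card_oldSet n m
  have hScard : (Oᶜ).card = m := by
    rw [Finset.card_compl, hOcard, Fintype.card_fin]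
    omega
  have hjcard : π.card = j := by
    rw [hπdef, Finset.card_image_of_injective _ hBinj, Finset.card_univ, Fintype.card_fin]
  have hπO : IsPartOn O π := hπ
  have hj1 : 1 ≤ j := by
    have hO1 : 0 < O.card := by omega
    obtain ⟨a, ha⟩ := Finset.card_pos.mp hO1
    obtain ⟨Bb, ⟨hBb, -⟩, -⟩ := hπO.2.2 a ha
    have := Finset.card_pos.mpr ⟨Bb, hBb⟩
    omega
  have hjn : j ≤ n := by
    have := hπO.card_le
    omega
  have hQpos : 0 < Q := by
    rw [hQ]
    apply Finset.prod_pos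
    intro C hC
    exact risingFac_pos (by linarith) _
  have hπsum : ∑ Bl ∈ π, ((Bl.card : ℝ) - σ) = (n : ℝ) - (j : ℝ) * σ := by
    rw [Finset.sum_sub_distrib, Finset.sum_const, ← Nat.cast_sum, hπO.sum_card, hOcard, hjcard]
    simp [nsmul_eq_mul]
  have hγeq : ∀ c : Finset (Fin j),
      -(∑ Bl ∈ π \ Finset.image B c, ((Bl.card : ℝ) - σ)) =
        -(n : ℝ) + (∑ i ∈ c, ((B i).card : ℝ)) + ((j : ℝ) - (c.card : ℝ)) * σ := by
    intro c
    have hsub : Finset.image B c ⊆ π := by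
      rw [hπdef]
      exact Finset.image_subset_image (Finset.subset_univ c)
    rw [Finset.sum_sdiff_eq_sub hsub, hπsum,
      Finset.sum_image (fun i _ i' _ h => hBinj h), Finset.sum_sub_distrib,
      Finset.sum_const]
    simp only [nsmul_eq_mul]
    ring
  have hextsum : ∀ F : Finset (Finset (Fin (n + m))) → ℝ,
      ∑ ρ ∈ extensions n m π, F ρ =
        ∑ ρ ∈ parts Finset.univ, (if restrictPart ρ O = π then F ρ else 0) := by
    intro F
    rw [extensions, parts, Finset.sum_filter, Finset.sum_filter]
    apply Finset.sum_congr rfl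
    intro ρ _
    by_cases h1 : IsPartOn Finset.univ ρ <;> by_cases h2 : restrictPart ρ O = π <;>
      simp [h1, ← hOdef, h2]
  have hTval : ∀ c : Finset (Fin j),
      ∑ ρ ∈ extensions n m π,
          (if (∀ i ∈ c, Scount n m (B i) ρ = 0) then gibbsW σ (V (n + m)) ρ else 0) =
        ∑ k ∈ Finset.range (m + 1),
          V (n + m) (j + k) *
            (Q * gfc m k σ (-(∑ Bl ∈ π \ Finset.image B c, ((Bl.card : ℝ) - σ))) / σ ^ k) := by
    intro c
    rw [hextsum]
    have hpoint : ∀ ρ ∈ parts (Finset.univ : Finset (Fin (n + m))),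
        (if restrictPart ρ O = π then
          (if (∀ i ∈ c, Scount n m (B i) ρ = 0) then gibbsW σ (V (n + m)) ρ else 0) else 0) =
        ∑ k ∈ Finset.range (m + 1), V (n + m) (j + k) *
          (if restrictPart ρ O = π ∧
              (∀ C ∈ ρ, ∀ Bl ∈ Finset.image B c, Bl ⊆ C → C ⊆ O) ∧
              ρ.card = π.card + k
            then ∏ C ∈ ρ, risingFac (1 - σ) (C.card - 1) else 0) := by
      intro ρ hρm
      have hρ : IsPartOn Finset.univ ρ := mem_parts.mp hρm
      have hforbiff : (∀ i ∈ c, Scount n m (B i) ρ = 0) ↔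
          (∀ C ∈ ρ, ∀ Bl ∈ Finset.image B c, Bl ⊆ C → C ⊆ O) := by
        constructor
        · intro h C hC Bl hBl hBlC
          obtain ⟨i, hi, rfl⟩ := Finset.mem_image.mp hBl
          exact (scount_eq_zero_iff (B i) ρ).mp (h i hi) C hC hBlC
        · intro h i hi
          rw [scount_eq_zero_iff]
          intro C hC hBC
          exact h C hC (B i) (Finset.mem_image_of_mem B hi) hBC
      by_cases h1 : restrictPart ρ O = π
      · by_cases h2 : ∀ i ∈ c, Scount n m (B i) ρ = 0
        · rw [if_pos h1, if_pos h2]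
          have hlow : π.card ≤ ρ.card := h1 ▸ card_restrictPart_le
          have hup : ρ.card ≤ π.card + m := by
            have := card_le_restr_add hρ O
            rw [h1, hScard] at this
            omega
          rw [Finset.sum_eq_single_of_mem (ρ.card - π.card)
            (Finset.mem_range.mpr (by omega))]
          · rw [if_pos ⟨h1, hforbiff.mp h2, by omega⟩]
            have hc : j + (ρ.card - π.card) = ρ.card := by omega
            simp only [gibbsW]
            rw [hc]
          · intro k hk hkne
            rw [if_neg, mul_zero]
            rintro ⟨-, -, hcard⟩
            omega
        · rw [if_pos h1, if_neg h2]
          symm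
          apply Finset.sum_eq_zero
          intro k hk
          rw [if_neg, mul_zero]
          rintro ⟨-, hf, -⟩
          exact h2 (hforbiff.mpr hf)
      · rw [if_neg h1]
        symm
        apply Finset.sum_eq_zero
        intro k hk
        rw [if_neg, mul_zero]
        rintro ⟨hres, -, -⟩
        exact h1 hres
    rw [Finset.sum_congr rfl hpoint, Finset.sum_comm]
    apply Finset.sum_congr rfl
    intro k hk
    rw [← Finset.mul_sum]
    congr 1
    have hcsub : Finset.image B c ⊆ π := by
      rw [hπdef]
      exact Finset.image_subset_image (Finset.subset_univ c)
    have hUeq : ∑ ρ ∈ parts (Finset.univ : Finset (Fin (n + m))),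
        (if restrictPart ρ O = π ∧
            (∀ C ∈ ρ, ∀ Bl ∈ Finset.image B c, Bl ⊆ C → C ⊆ O) ∧
            ρ.card = π.card + k
          then ∏ C ∈ ρ, risingFac (1 - σ) (C.card - 1) else 0) =
        Uaux σ O π (Finset.image B c) Oᶜ k := by
      rw [Uaux, huniv]
    rw [hUeq, Uaux_main σ hσ0 hπO hcsub Oᶜ disjoint_compl_right k, hScard, ← hQ]
  have hden : ∑ ρ ∈ extensions n m π, gibbsW σ (V (n + m)) ρ = Q * V n j := by
    have h0 := hTval ∅
    have htriv : ∀ ρ ∈ extensions n m π,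
        (if (∀ i ∈ (∅ : Finset (Fin j)), Scount n m (B i) ρ = 0)
          then gibbsW σ (V (n + m)) ρ else 0) = gibbsW σ (V (n + m)) ρ := by
      intro ρ _
      rw [if_pos (fun i hi => absurd hi (Finset.notMem_empty i))]
    rw [← Finset.sum_congr rfl htriv, h0]
    have hγ0 : -(∑ Bl ∈ π \ Finset.image B (∅ : Finset (Fin j)), ((Bl.card : ℝ) - σ)) =
        (j : ℝ) * σ - (n : ℝ) := by
      rw [Finset.image_empty, Finset.sdiff_empty, hπsum]
      ring
    rw [hγ0]
    have halg := algden σ hσ0 V hVrec n j hj1 hjn m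
    rw [← halg, Finset.mul_sum]
    apply Finset.sum_congr rfl
    intro k hk
    ring
  have hZeq : ∀ ρ : Finset (Finset (Fin (n + m))),
      ((Finset.univ.filter fun i : Fin j => Scount n m (B i) ρ = 0)ᶜ).card =
        RcntB n m j B ρ := by
    intro ρ
    rw [RcntB]
    congr 1
    ext i
    simp [Finset.mem_compl]
  have hnum : ∑ ρ ∈ extensions n m π,
      fallingFac ((RcntB n m j B ρ : ℕ) : ℝ) r * gibbsW σ (V (n + m)) ρ =
      (Nat.factorial r : ℝ) * ∑ v ∈ Finset.range (r + 1),
        ibinom ((j : ℤ) - (v : ℤ)) ((r : ℤ) - (v : ℤ)) * (-1 : ℝ) ^ v *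
          ∑ c ∈ (Finset.univ : Finset (Fin j)).powersetCard v,
            ∑ k ∈ Finset.range (m + 1),
              V (n + m) (j + k) *
                (Q * gfc m k σ (-(∑ Bl ∈ π \ Finset.image B c, ((Bl.card : ℝ) - σ))) /
                  σ ^ k) := by
    have hpoint : ∀ ρ : Finset (Finset (Fin (n + m))),
        fallingFac ((RcntB n m j B ρ : ℕ) : ℝ) r =
        (Nat.factorial r : ℝ) * ∑ v ∈ Finset.range (r + 1),
          ibinom ((j : ℤ) - (v : ℤ)) ((r : ℤ) - (v : ℤ)) * (-1 : ℝ) ^ v *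
            ∑ c ∈ (Finset.univ : Finset (Fin j)).powersetCard v,
              (if (∀ i ∈ c, Scount n m (B i) ρ = 0) then (1 : ℝ) else 0) := by
      intro ρ
      have hci := CI (ι := Fin j) (Finset.univ.filter fun i => Scount n m (B i) ρ = 0) r
      rw [hZeq ρ, Fintype.card_fin] at hci
      rw [hci]
      congr 1
      apply Finset.sum_congr rfl
      intro v hv
      congr 1
      apply Finset.sum_congr rfl
      intro c hc
      refine if_congr ?_ rfl rfl
      constructor
      · intro h i hi
        exact (Finset.mem_filter.mp (h hi)).2
      · intro h i hi
        exact Finset.mem_filter.mpr ⟨Finset.mem_univ i, h i hi⟩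
    rw [Finset.sum_congr rfl (fun ρ _ => by
      rw [hpoint ρ, mul_assoc, Finset.sum_mul])]
    rw [← Finset.mul_sum]
    congr 1
    rw [Finset.sum_comm]
    apply Finset.sum_congr rfl
    intro v hv
    rw [Finset.sum_congr rfl (fun ρ (_ : ρ ∈ extensions n m π) => by
      rw [mul_assoc, Finset.sum_mul,
        Finset.sum_congr rfl (fun c (_ : c ∈ (Finset.univ : Finset (Fin j)).powersetCard v) => by
          rw [ite_mul, one_mul, zero_mul])])]
    rw [← Finset.mul_sum]
    congr 1
    rw [Finset.sum_comm]
    apply Finset.sum_congr rfl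
    intro c hc
    exact hTval c
  show (∑ ρ ∈ extensions n m π, fallingFac ((RcntB n m j B ρ : ℕ) : ℝ) r *
      gibbsW σ (V (n + m)) ρ) / (∑ ρ ∈ extensions n m π, gibbsW σ (V (n + m)) ρ) = _
  rw [hnum, hden, div_eq_iff (ne_of_gt (mul_pos hQpos hVnj))]
  rw [mul_assoc (Nat.factorial r : ℝ)]
  congr 1
  simp only [Finset.sum_mul, Finset.mul_sum]
  apply Finset.sum_congr rfl
  intro v hv
  apply Finset.sum_congr rfl
  intro c hc
  apply Finset.sum_congr rfl
  intro k hk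
  have hcv : (c.card : ℝ) = (v : ℝ) := by
    rw [(Finset.mem_powersetCard.mp hc).2]
  have hγc : -(n : ℝ) + (∑ i ∈ c, ((B i).card : ℝ)) + ((j : ℝ) - (v : ℝ)) * σ =
      -(∑ Bl ∈ π \ Finset.image B c, ((Bl.card : ℝ) - σ)) := by
    rw [hγeq c, hcv]
  rw [← hγc]
  have hVnj' : V n j ≠ 0 := ne_of_gt hVnj
  field_simp
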